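/- arXiv:1612.03456 — 8 statements merged into one kernel-verified Lean document; each statement's English description precedes it below -/
import Mathlib

section
/- Let G be a finite group with |G| = m, let g ∈ G, and let k be an integer with 1 ≤ k ≤ m. Among all pairs (A, B) where A and B are k-element subsets of G, the number of pairs for which g is NOT expressible as a product ab with a ∈ A and b ∈ B is at most e^{-k²/m} · C(m,k)², where C(m,k) is the binomial coefficient. Equivalently, if A and B are chosen uniformly at random among k-element subsets of G (independently, i.e. sampling without replacement), then Pr[g ∈ AB] ≥ 1 − e^{-k²/m}. -/
open Finset

lemma choose_ratio (m k : ℕ) (hk1 : 1 ≤ k) (hkm : k ≤ m) :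
    ((m - k).choose k : ℝ) ≤ Real.exp (-((k : ℝ) ^ 2) / m) * m.choose k := by
  have hm0 : (0 : ℝ) < m := by
    have : 0 < m := lt_of_lt_of_le hk1 hkm
    exact_mod_cast this
  have hfac : (0 : ℝ) < (k.factorial : ℝ) := by exact_mod_cast k.factorial_pos
  rw [← mul_le_mul_iff_right₀ hfac]
  have h1 : (k.factorial : ℝ) * ((m - k).choose k : ℝ) = ((m - k).descFactorial k : ℝ) := by
    rw [Nat.descFactorial_eq_factorial_mul_choose]; push_cast; ring
  have h2 : (k.factorial : ℝ) * (Real.exp (-((k : ℝ) ^ 2) / m) * m.choose k)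
      = Real.exp (-((k : ℝ) ^ 2) / m) * (m.descFactorial k : ℝ) := by
    rw [Nat.descFactorial_eq_factorial_mul_choose]; push_cast; ring
  rw [h1, h2, Nat.descFactorial_eq_prod_range, Nat.descFactorial_eq_prod_range]
  push_cast
  have key : ∀ i ∈ range k, ((m - k - i : ℕ) : ℝ) ≤ Real.exp (-(k : ℝ) / m) * ((m - i : ℕ) : ℝ) := by
    intro i hi
    have hik : i < k := mem_range.mp hi
    have him : i < m := lt_of_lt_of_le hik hkm
    have hmi : ((m - i : ℕ) : ℝ) = (m : ℝ) - i := by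
      push_cast [Nat.cast_sub him.le]; ring
    have hexp : 1 - (k : ℝ) / m ≤ Real.exp (-(k : ℝ) / m) := by
      rw [neg_div]
      linarith [Real.add_one_le_exp (-((k : ℝ) / m))]
    have hminonneg : (0 : ℝ) ≤ (m : ℝ) - i := by
      have : (i : ℝ) ≤ m := by exact_mod_cast him.le
      linarith
    by_cases hcase : k + i ≤ m
    · have hcast : ((m - k - i : ℕ) : ℝ) = (m : ℝ) - k - i := by
        rw [Nat.sub_sub]
        push_cast [Nat.cast_sub hcase]; ring
      rw [hcast, hmi]
      have h3 : (m : ℝ) - k - i ≤ (1 - (k : ℝ) / m) * ((m : ℝ) - i) := by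
        have hki : (0 : ℝ) ≤ (k : ℝ) * i / m := by positivity
        have : (1 - (k : ℝ) / m) * ((m : ℝ) - i) = (m : ℝ) - k - i + (k : ℝ) * i / m := by
          field_simp; ring
        linarith
      calc (m : ℝ) - k - i ≤ (1 - (k : ℝ) / m) * ((m : ℝ) - i) := h3
        _ ≤ Real.exp (-(k : ℝ) / m) * ((m : ℝ) - i) :=
          mul_le_mul_of_nonneg_right hexp hminonneg
    · have : m - k - i = 0 := by omega
      rw [this, hmi]
      simp only [Nat.cast_zero]
      positivity
  calc ∏ i ∈ range k, ((m - k - i : ℕ) : ℝ)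
      ≤ ∏ i ∈ range k, (Real.exp (-(k : ℝ) / m) * ((m - i : ℕ) : ℝ)) := by
        apply Finset.prod_le_prod
        · intro i _; positivity
        · exact key
    _ = Real.exp (-((k : ℝ) ^ 2) / m) * ∏ i ∈ range k, ((m - i : ℕ) : ℝ) := by
        rw [Finset.prod_mul_distrib, Finset.prod_const, Finset.card_range]
        congr 1
        rw [← Real.exp_nat_mul]
        congr 1
        ring

/-- Picking `k`-element subsets `A`, `B` of a finite group `G` of order `m`
(with `1 ≤ k ≤ m`), the number of pairs `(A, B)` for which a fixed `g ∈ G` is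
not a product `a * b` with `a ∈ A`, `b ∈ B` is at most `e^{-k²/m} · C(m,k)²`. -/
theorem stmt0 {G : Type*} [Group G] [Fintype G] [DecidableEq G]
    (m k : ℕ) (hm : Fintype.card G = m) (g : G) (hk1 : 1 ≤ k) (hkm : k ≤ m) :
    ((((Finset.univ.powersetCard k) ×ˢ (Finset.univ.powersetCard k)).filter
      (fun p : Finset G × Finset G => ¬ ∃ a ∈ p.1, ∃ b ∈ p.2, a * b = g)).card : ℝ) ≤
      Real.exp (-((k : ℝ) ^ 2) / m) * (m.choose k) ^ 2 := by
  classical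
  set 𝒜 := (Finset.univ : Finset G).powersetCard k with h𝒜
  have hAcard : 𝒜.card = m.choose k := by
    rw [h𝒜, Finset.card_powersetCard, Finset.card_univ, hm]
  have hcount : (((𝒜 ×ˢ 𝒜).filter
      (fun p : Finset G × Finset G => ¬ ∃ a ∈ p.1, ∃ b ∈ p.2, a * b = g)).card)
      ≤ m.choose k * (m - k).choose k := by
    rw [Finset.card_eq_sum_card_fiberwise (f := Prod.fst) (t := 𝒜)
      (fun p hp => (Finset.mem_product.mp (Finset.mem_filter.mp hp).1).1)]
    have hfiber : ∀ A ∈ 𝒜,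
        (((𝒜 ×ˢ 𝒜).filter
          (fun p : Finset G × Finset G => ¬ ∃ a ∈ p.1, ∃ b ∈ p.2, a * b = g)).filter
          (fun p => p.1 = A)).card ≤ (m - k).choose k := by
      intro A hA
      have hAk : A.card = k := (Finset.mem_powersetCard.mp hA).2
      set T := Finset.univ.filter (fun b : G => ∀ a ∈ A, a * b ≠ g) with hT
      have hsub : (((𝒜 ×ˢ 𝒜).filter
          (fun p : Finset G × Finset G => ¬ ∃ a ∈ p.1, ∃ b ∈ p.2, a * b = g)).filter
          (fun p => p.1 = A)) ⊆ {A} ×ˢ T.powersetCard k := by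
        intro p hp
        obtain ⟨hp1, hp2⟩ := Finset.mem_filter.mp hp
        obtain ⟨hpp, hnex⟩ := Finset.mem_filter.mp hp1
        obtain ⟨-, hB⟩ := Finset.mem_product.mp hpp
        rw [Finset.mem_product]
        refine ⟨Finset.mem_singleton.mpr hp2, ?_⟩
        rw [Finset.mem_powersetCard]
        refine ⟨fun b hb => ?_, (Finset.mem_powersetCard.mp hB).2⟩
        rw [hT, Finset.mem_filter]
        refine ⟨Finset.mem_univ _, fun a ha hab => ?_⟩
        exact hnex ⟨a, by rw [hp2]; exact ha, b, hb, hab⟩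
      have hTcard : T.card ≤ m - k := by
        have hA' : (A.image (fun a : G => a⁻¹ * g)).card = k := by
          rw [Finset.card_image_of_injective _ (fun a b h => by
            simpa using mul_right_cancel h), hAk]
        have hTsub : T ⊆ Finset.univ \ A.image (fun a : G => a⁻¹ * g) := by
          intro b hb
          rw [Finset.mem_sdiff]
          refine ⟨Finset.mem_univ _, fun hmem => ?_⟩
          obtain ⟨a, ha, hab⟩ := Finset.mem_image.mp hmem
          exact (Finset.mem_filter.mp hb).2 a ha (by rw [← hab]; group)
        calc T.card ≤ (Finset.univ \ A.image (fun a : G => a⁻¹ * g)).card :=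
              Finset.card_le_card hTsub
          _ = m - k := by
              rw [Finset.card_sdiff_of_subset (Finset.subset_univ _), Finset.card_univ, hm, hA']
      calc _ ≤ ({A} ×ˢ T.powersetCard k).card := Finset.card_le_card hsub
        _ = T.card.choose k := by
            rw [Finset.card_product, Finset.card_singleton, Finset.card_powersetCard, one_mul]
        _ ≤ (m - k).choose k := Nat.choose_le_choose k hTcard
    calc ∑ A ∈ 𝒜, (((𝒜 ×ˢ 𝒜).filter
          (fun p : Finset G × Finset G => ¬ ∃ a ∈ p.1, ∃ b ∈ p.2, a * b = g)).filter
          (fun p => p.1 = A)).card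
        ≤ ∑ _A ∈ 𝒜, (m - k).choose k := Finset.sum_le_sum hfiber
      _ = m.choose k * (m - k).choose k := by rw [Finset.sum_const, hAcard, smul_eq_mul]
  have hreal : ((m.choose k * (m - k).choose k : ℕ) : ℝ)
      ≤ Real.exp (-((k : ℝ) ^ 2) / m) * (m.choose k) ^ 2 := by
    push_cast
    calc (m.choose k : ℝ) * ((m - k).choose k : ℝ)
        ≤ (m.choose k : ℝ) * (Real.exp (-((k : ℝ) ^ 2) / m) * m.choose k) :=
          mul_le_mul_of_nonneg_left (choose_ratio m k hk1 hkm) (by positivity)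
      _ = Real.exp (-((k : ℝ) ^ 2) / m) * (m.choose k) ^ 2 := by ring
  exact le_trans (by exact_mod_cast hcount) hreal
end

section
/- There exists a constant C > 0 such that for every integer n ≥ 2, the unique real x ≥ 1 solving x! = √(n!) satisfies n/2 ≤ x ≤ (n/2)(1 + C/log n). In particular, x = (n/2)(1 + O(1/log n)) as n → ∞. -/
set_option maxHeartbeats 800000

theorem aux_fact_mul_pow_le {a b : ℕ} (hab : a ≤ b) :
    a.factorial * (a + 1) ^ (b - a) ≤ b.factorial := by
  induction b, hab using Nat.le_induction with
  | base => simp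
  | succ b hab ih =>
    have e : b + 1 - a = (b - a) + 1 := by omega
    rw [e, pow_succ, ← mul_assoc]
    calc a.factorial * (a + 1) ^ (b - a) * (a + 1)
        ≤ b.factorial * (a + 1) := Nat.mul_le_mul_right _ ih
      _ ≤ b.factorial * (b + 1) := Nat.mul_le_mul_left _ (by omega)
      _ = (b + 1).factorial := by rw [Nat.factorial_succ]; ring

theorem aux_key_nat {n m h : ℕ} (hmn : m ≤ n) (hhm : h ≤ m) (hnmh : n - m ≤ h)
    (hpow : 2 ^ n ≤ (h + 1) ^ (m - h)) :
    n.factorial ≤ m.factorial * m.factorial := by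
  have hc : n.choose m ≤ 2 ^ n := by
    calc n.choose m ≤ ∑ i ∈ Finset.range (n + 1), n.choose i :=
          Finset.single_le_sum (fun i _ => Nat.zero_le _) (Finset.mem_range.mpr (by omega))
      _ = 2 ^ n := Nat.sum_range_choose n
  have h1 : n.factorial ≤ 2 ^ n * (m.factorial * (n - m).factorial) := by
    calc n.factorial = n.choose m * m.factorial * (n - m).factorial :=
          (Nat.choose_mul_factorial_mul_factorial hmn).symm
      _ ≤ 2 ^ n * m.factorial * (n - m).factorial := by
          exact Nat.mul_le_mul_right _ (Nat.mul_le_mul_right _ hc)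
      _ = 2 ^ n * (m.factorial * (n - m).factorial) := by ring
  calc n.factorial ≤ 2 ^ n * (m.factorial * (n - m).factorial) := h1
    _ ≤ (h + 1) ^ (m - h) * (m.factorial * h.factorial) := by
        exact Nat.mul_le_mul hpow (Nat.mul_le_mul_left _ (Nat.factorial_le hnmh))
    _ = m.factorial * (h.factorial * (h + 1) ^ (m - h)) := by ring
    _ ≤ m.factorial * m.factorial :=
        Nat.mul_le_mul_left _ (aux_fact_mul_pow_le hhm)

/-- There is a constant `C > 0` such that for every `n ≥ 2`, the unique real
`x ≥ 1` with `x! = √(n!)` (where `x! = Γ(x+1)`) satisfies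
`n/2 ≤ x ≤ (n/2)(1 + C/log n)`. -/
theorem stmt2 : ∃ C : ℝ, 0 < C ∧ ∀ n : ℕ, 2 ≤ n → ∀ x : ℝ, 1 ≤ x →
    Real.Gamma (x + 1) = Real.sqrt (n.factorial) →
    (n : ℝ) / 2 ≤ x ∧ x ≤ (n : ℝ) / 2 * (1 + C / Real.log n) := by
  refine ⟨10, by norm_num, fun n hn x hx hgx => ?_⟩
  have hn2 : (2 : ℝ) ≤ (n : ℝ) := by exact_mod_cast hn
  have hnpos : (0 : ℝ) < (n : ℝ) := by linarith
  have hL : 0 < Real.log n := Real.log_pos (by exact_mod_cast (by omega : 1 < n))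
  have hfacpos : (0 : ℝ) < (n.factorial : ℝ) := by
    exact_mod_cast Nat.factorial_pos n
  have hmemx : x + 1 ∈ Set.Ici (2 : ℝ) := by simp; linarith
  set L := Real.log n with hLdef
  -- Lower bound via log-convexity
  have hconv := Real.convexOn_log_Gamma.2 (x := (1 : ℝ)) (y := (n : ℝ) + 1)
    (by norm_num) (by simp; positivity) (by norm_num : (0:ℝ) ≤ 1/2)
    (by norm_num : (0:ℝ) ≤ 1/2) (by norm_num)
  simp only [Function.comp, smul_eq_mul] at hconv
  have e1 : 1/2 * (1:ℝ) + 1/2 * ((n : ℝ) + 1) = (n : ℝ)/2 + 1 := by ring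
  rw [e1, Real.Gamma_one, Real.log_one, Real.Gamma_nat_eq_factorial] at hconv
  have hghalf : 0 < Real.Gamma ((n : ℝ)/2 + 1) := Real.Gamma_pos_of_pos (by positivity)
  have hsqrtpos : 0 < Real.sqrt (n.factorial : ℝ) := Real.sqrt_pos.mpr hfacpos
  have hlow : Real.Gamma ((n : ℝ)/2 + 1) ≤ Real.sqrt (n.factorial : ℝ) := by
    have hs : Real.log (Real.sqrt (n.factorial : ℝ)) = Real.log (n.factorial : ℝ) / 2 :=
      Real.log_sqrt hfacpos.le
    calc Real.Gamma ((n : ℝ)/2 + 1) = Real.exp (Real.log (Real.Gamma ((n : ℝ)/2 + 1))) :=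
          (Real.exp_log hghalf).symm
      _ ≤ Real.exp (1/2 * 0 + 1/2 * Real.log (n.factorial : ℝ)) := Real.exp_le_exp.2 hconv
      _ = Real.sqrt (n.factorial : ℝ) := by rw [← Real.exp_log hsqrtpos, hs]; ring_nf
  have hmemhalf : (n : ℝ)/2 + 1 ∈ Set.Ici (2 : ℝ) := by simp; linarith
  have hlower : (n : ℝ)/2 ≤ x := by
    have := (Real.Gamma_strictMonoOn_Ici.le_iff_le hmemhalf hmemx).1 (by rw [hgx]; exact hlow)
    linarith
  refine ⟨hlower, ?_⟩
  -- Upper bound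
  set y : ℝ := (n : ℝ)/2 * (1 + 10 / L) with hydef
  have h10L : 0 < 10 / L := by positivity
  have hy1 : (n : ℝ)/2 ≤ y := by nlinarith
  have hyge1 : (1 : ℝ) ≤ y := by linarith
  set m : ℕ := ⌊y⌋₊ with hmdef
  have hm1 : 1 ≤ m := Nat.le_floor (by exact_mod_cast hyge1)
  have hmy : (m : ℝ) ≤ y := Nat.floor_le (by linarith)
  have hym : y - 1 ≤ (m : ℝ) := by linarith [Nat.lt_floor_add_one y]
  have key : n.factorial ≤ m.factorial * m.factorial := by
    by_cases hcase : L ≤ 10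
    · -- trivial case : y ≥ n
      have hyn : (n : ℝ) ≤ y := by
        have h1 : (1 : ℝ) ≤ 10 / L := (one_le_div hL).2 (by linarith)
        have h2 : (2 : ℝ) ≤ 1 + 10 / L := by linarith
        nlinarith
      have hnm : n ≤ m := Nat.le_floor (by exact_mod_cast hyn)
      calc n.factorial ≤ m.factorial := Nat.factorial_le hnm
        _ = m.factorial * 1 := (mul_one _).symm
        _ ≤ m.factorial * m.factorial := Nat.mul_le_mul_left _ (Nat.one_le_iff_ne_zero.mpr
            (Nat.factorial_ne_zero m))
    · push_neg at hcase
      have hlogle : L ≤ (n : ℝ) := by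
        have := Real.log_le_sub_one_of_pos hnpos; linarith
      have hlog2u : Real.log 2 < 0.6931471808 := Real.log_two_lt_d9
      have hlog2pos : 0 < Real.log 2 := Real.log_pos one_lt_two
      have hnL : 1 ≤ (n : ℝ) / L := (le_div_iff₀ hL).2 (by linarith)
      set h : ℕ := n / 2 with hhdef
      have hh2 : (n : ℝ) < 2 * ((h : ℝ) + 1) := by
        have : n < 2 * (h + 1) := by omega
        exact_mod_cast this
      have hhn : (h : ℝ) ≤ (n : ℝ) / 2 := by
        have : 2 * h ≤ n := by omega
        have : (2 : ℝ) * (h : ℝ) ≤ (n : ℝ) := by exact_mod_cast this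
        linarith
      have hyexp : y = (n : ℝ)/2 + 5 * (n : ℝ) / L := by
        rw [hydef]; field_simp; ring
      have h5L : 5 ≤ 5 * (n : ℝ) / L := by
        have : (5:ℝ) * ((n:ℝ)/L) = 5 * (n:ℝ)/L := by ring
        linarith [this ▸ (by nlinarith : (5:ℝ) ≤ 5 * ((n:ℝ)/L))]
      have hyn : y < (n : ℝ) := by
        rw [hyexp]
        have h1 : (n : ℝ)/2 * 10 < (n : ℝ)/2 * L :=
          mul_lt_mul_of_pos_left hcase (by positivity)
        have h2 : 5 * (n : ℝ) / L < (n : ℝ) / 2 := by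
          rw [div_lt_iff₀ hL]; linarith
        linarith
      have hmn : m ≤ n := by
        have : (m : ℝ) < (n : ℝ) := lt_of_le_of_lt hmy hyn
        exact_mod_cast this.le
      have hhm : h ≤ m := Nat.le_floor (by
        show (h : ℝ) ≤ y
        linarith)
      have hnmh : n - m ≤ h := by
        have hr : (n : ℝ) ≤ (h : ℝ) + (m : ℝ) := by
          rw [hyexp] at hym
          linarith
        have : n ≤ h + m := by exact_mod_cast hr
        omega
      -- the power inequality
      have hmh : 5 * (n : ℝ) / L - 1 ≤ (m : ℝ) - (h : ℝ) := by
        rw [hyexp] at hym; linarith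
      have hlogh : L - Real.log 2 ≤ Real.log ((h : ℝ) + 1) := by
        have hn2h : (n : ℝ) / 2 ≤ (h : ℝ) + 1 := by linarith
        have : L - Real.log 2 = Real.log ((n : ℝ) / 2) := by
          rw [Real.log_div (ne_of_gt hnpos) two_ne_zero]
        rw [this]
        exact Real.log_le_log (by positivity) hn2h
      have hkey : (n : ℝ) * Real.log 2 ≤ ((m : ℝ) - (h : ℝ)) * Real.log ((h : ℝ) + 1) := by
        have h1 : (0 : ℝ) ≤ 5 * (n : ℝ) / L - 1 := by linarith
        have h2 : (0 : ℝ) ≤ L - Real.log 2 := by linarith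
        have step : (n : ℝ) * Real.log 2 ≤ (5 * (n : ℝ) / L - 1) * (L - Real.log 2) := by
          set t : ℝ := (n : ℝ) / L with htdef
          have ht1 : 1 ≤ t := hnL
          have ht2 : t * L = (n : ℝ) := by rw [htdef]; field_simp
          have ht10 : 10 * t ≤ (n : ℝ) := by nlinarith
          have e : 5 * (n : ℝ) / L = 5 * t := by rw [htdef]; ring
          rw [e]
          nlinarith [mul_nonneg (by linarith : (0:ℝ) ≤ 0.7 - Real.log 2) hnpos.le,
            mul_nonneg (by linarith : (0:ℝ) ≤ 0.7 - Real.log 2) (by linarith : (0:ℝ) ≤ t)]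
        calc (n : ℝ) * Real.log 2 ≤ (5 * (n : ℝ) / L - 1) * (L - Real.log 2) := step
          _ ≤ ((m : ℝ) - (h : ℝ)) * (L - Real.log 2) := by
              exact mul_le_mul_of_nonneg_right hmh h2
          _ ≤ ((m : ℝ) - (h : ℝ)) * Real.log ((h : ℝ) + 1) := by
              exact mul_le_mul_of_nonneg_left hlogh (by linarith)
      have hcast : ((m - h : ℕ) : ℝ) = (m : ℝ) - (h : ℝ) := Nat.cast_sub hhm
      have hpowR : (2 : ℝ) ^ n ≤ ((h : ℝ) + 1) ^ (m - h) := by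
        have l1 : Real.log ((2 : ℝ) ^ n) = (n : ℝ) * Real.log 2 := by rw [Real.log_pow]
        have l2 : Real.log (((h : ℝ) + 1) ^ (m - h)) =
            ((m - h : ℕ) : ℝ) * Real.log ((h : ℝ) + 1) := Real.log_pow _ _
        have hlog_le : Real.log ((2 : ℝ) ^ n) ≤ Real.log (((h : ℝ) + 1) ^ (m - h)) := by
          rw [l1, l2, hcast]; exact hkey
        have := Real.exp_le_exp.2 hlog_le
        rwa [Real.exp_log (by positivity), Real.exp_log (by positivity)] at this
      have hpow : 2 ^ n ≤ (h + 1) ^ (m - h) := by exact_mod_cast hpowR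
      exact aux_key_nat hmn hhm hnmh hpow
  -- conclude
  have hmfac : Real.sqrt (n.factorial : ℝ) ≤ (m.factorial : ℝ) := by
    have h2 : (n.factorial : ℝ) ≤ (m.factorial : ℝ) ^ 2 := by
      rw [sq]; exact_mod_cast key
    calc Real.sqrt (n.factorial : ℝ) ≤ Real.sqrt ((m.factorial : ℝ) ^ 2) :=
          Real.sqrt_le_sqrt h2
      _ = (m.factorial : ℝ) := Real.sqrt_sq (by positivity)
  have hmemm : (m : ℝ) + 1 ∈ Set.Ici (2 : ℝ) := by
    have : (1:ℝ) ≤ (m:ℝ) := by exact_mod_cast hm1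
    simp; linarith
  have hmemy : y + 1 ∈ Set.Ici (2 : ℝ) := by simp; linarith
  have hGy : Real.Gamma (x + 1) ≤ Real.Gamma (y + 1) := by
    rw [hgx]
    calc Real.sqrt (n.factorial : ℝ) ≤ (m.factorial : ℝ) := hmfac
      _ = Real.Gamma ((m : ℝ) + 1) := (Real.Gamma_nat_eq_factorial m).symm
      _ ≤ Real.Gamma (y + 1) :=
          Real.Gamma_strictMonoOn_Ici.monotoneOn hmemm hmemy (by linarith)
  have := (Real.Gamma_strictMonoOn_Ici.le_iff_le hmemx hmemy).1 hGy
  linarith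
end

section
/- Let x = x(n) be the unique real solution with x ≥ 1 of x! = √(n!) (for n ≥ 2). Then x = (n/2)(1 + (log 2)/(log n) + O((log n)^{-2})); that is, there exist a constant C > 0 and an integer n₀ such that for all n ≥ n₀, |x − (n/2)(1 + (log 2)/(log n))| ≤ C·n/(log n)². -/
open Filter Real

lemma gdiff {y h : ℝ} (hy : 1 ≤ y) (hh : 0 ≤ h) :
    y * Real.log y - y + h * (Real.log y - 1) ≤ (y + h) * Real.log (y + h) - (y + h) := by
  have hy0 : (0:ℝ) < y := by linarith
  have hlog : Real.log y ≤ Real.log (y + h) := Real.log_le_log hy0 (by linarith)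
  nlinarith [mul_nonneg (by linarith : (0:ℝ) ≤ y + h) (sub_nonneg.mpr hlog)]

lemma sseq_lb (n : ℕ) : Real.sqrt π ≤ Stirling.stirlingSeq (n + 1) :=
  Stirling.stirlingSeq'_antitone.le_of_tendsto
    (Stirling.tendsto_stirlingSeq_sqrt_pi.comp (tendsto_add_atTop_nat 1)) n

lemma log_fact_lower (n : ℕ) (hn : 1 ≤ n) :
    (n : ℝ) * Real.log n - n ≤ Real.log (n.factorial) := by
  obtain ⟨m, rfl⟩ := Nat.exists_eq_add_of_le hn
  set k := 1 + m with hk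
  have hf := Stirling.log_stirlingSeq_formula k
  have h1 : Real.log ((k:ℝ) / rexp 1) = Real.log k - 1 := by
    rw [Real.log_div (by positivity) (Real.exp_ne_zero 1), Real.log_exp]
  have h2 : (0:ℝ) ≤ Real.log (Stirling.stirlingSeq k) := by
    refine Real.log_nonneg ?_
    have := sseq_lb m
    have hπ : (1:ℝ) ≤ Real.sqrt π := by
      rw [show (1:ℝ) = Real.sqrt 1 by simp]
      exact Real.sqrt_le_sqrt (by linarith [Real.pi_gt_three])
    have hkm : k = m + 1 := by omega
    rw [hkm]; linarith
  have h3 : (0:ℝ) ≤ 1/2 * Real.log (2 * k) := by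
    have : (0:ℝ) ≤ Real.log (2*k) := Real.log_nonneg (by
      have : (1:ℝ) ≤ (k:ℝ) := by exact_mod_cast Nat.le_add_right 1 m
      linarith)
    linarith
  rw [h1] at hf
  nlinarith [hf]

lemma log_fact_upper (n : ℕ) (hn : 1 ≤ n) :
    Real.log (n.factorial) ≤ (n : ℝ) * Real.log n - n + Real.log (2 * n) + 1 := by
  obtain ⟨m, rfl⟩ := Nat.exists_eq_add_of_le hn
  set k := 1 + m with hk
  have hf := Stirling.log_stirlingSeq_formula k
  have h1 : Real.log ((k:ℝ) / rexp 1) = Real.log k - 1 := by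
    rw [Real.log_div (by positivity) (Real.exp_ne_zero 1), Real.log_exp]
  have h2 : Real.log (Stirling.stirlingSeq k) ≤ 1 := by
    have hmono : Stirling.stirlingSeq k ≤ Stirling.stirlingSeq 1 := by
      have h := Stirling.stirlingSeq'_antitone (Nat.zero_le m)
      have hkm : k = m + 1 := by omega
      rw [hkm]; simpa using h
    have h1s : Stirling.stirlingSeq 1 = rexp 1 / Real.sqrt 2 := Stirling.stirlingSeq_one
    have : Stirling.stirlingSeq k ≤ rexp 1 := by
      rw [h1s] at hmono
      have h2' : (1:ℝ) ≤ Real.sqrt 2 := by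
        rw [show (1:ℝ) = Real.sqrt 1 by simp]
        exact Real.sqrt_le_sqrt (by norm_num)
      have := div_le_self (le_of_lt (Real.exp_pos 1)) h2'
      linarith
    calc Real.log (Stirling.stirlingSeq k) ≤ Real.log (rexp 1) := by
          refine Real.log_le_log ?_ this
          have hkm : k = m + 1 := by omega
          rw [hkm]; exact Stirling.stirlingSeq'_pos m
      _ = 1 := Real.log_exp 1
  have h3 : 1/2 * Real.log (2 * k) ≤ Real.log (2 * k) := by
    have : (0:ℝ) ≤ Real.log (2*k) := Real.log_nonneg (by
      have : (1:ℝ) ≤ (k:ℝ) := by exact_mod_cast Nat.le_add_right 1 m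
      linarith)
    linarith
  rw [h1] at hf
  nlinarith [hf]



lemma num_side (u L : ℝ) (hu : 100 ≤ u) (hL : 100 ≤ L) :
    2 * (u * L) + 2 * L + 4 + 2 ≤ 2 * (100 * u - 1) * (L - 3) ∧
    2 * (u * L) + (1 + L) + 1 ≤ 2 * (100 * u - 1) * (L - 2) := by
  constructor <;> nlinarith [mul_nonneg (sub_nonneg.mpr hu) (sub_nonneg.mpr hL)]

lemma B_bound (a la l2 : ℝ) (h1 : 0 ≤ la) (h2 : la ≤ a) (h3 : 0 < a) (h4 : a ≤ 1/100)
    (h5 : 0 < l2) (h6 : l2 ≤ 1) :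
    (1 + a) * la - a * (1 + l2) ≤ 2 * a ∧ -(2 * a) ≤ (1 + a) * la - a * (1 + l2) := by
  constructor <;> nlinarith

set_option maxHeartbeats 1000000 in
/-- Let `x = x(n)` be the unique real solution `x ≥ 1` of `x! = √(n!)` (with
`x! = Γ(x+1)`). Then `x = (n/2)(1 + (log 2)/(log n) + O((log n)⁻²))`: there are
`C > 0` and `n₀` such that for all `n ≥ n₀`,
`|x − (n/2)(1 + (log 2)/(log n))| ≤ C·n/(log n)²`. -/
theorem stmt3 : ∃ C : ℝ, 0 < C ∧ ∃ n₀ : ℕ, ∀ n : ℕ, n₀ ≤ n → ∀ x : ℝ, 1 ≤ x →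
    Real.Gamma (x + 1) = Real.sqrt (n.factorial) →
    |x - (n : ℝ) / 2 * (1 + Real.log 2 / Real.log n)| ≤ C * n / (Real.log n) ^ 2 := by
  refine ⟨100, by norm_num, ?_⟩
  have hev1 : ∀ᶠ n : ℕ in atTop, 100 ≤ Real.log n :=
    (Real.tendsto_log_atTop.comp tendsto_natCast_atTop_atTop).eventually_ge_atTop 100
  have hev2 : ∀ᶠ n : ℕ in atTop, Real.log n ^ 3 ≤ (n : ℝ) := by
    have h0 : Tendsto (fun x : ℝ => Real.log x ^ 3 / (1 * x + 0)) atTop (nhds 0) :=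
      Real.tendsto_pow_log_div_mul_add_atTop 1 0 3 one_ne_zero
    have h1 : ∀ᶠ x : ℝ in atTop, Real.log x ^ 3 / (1 * x + 0) < 1 :=
      h0.eventually_lt_const (by norm_num)
    have h3 : ∀ᶠ x : ℝ in atTop, Real.log x ^ 3 ≤ x := by
      filter_upwards [h1, eventually_ge_atTop (1:ℝ)] with y hy1 hy2
      rw [div_lt_one (by linarith)] at hy1
      linarith
    exact tendsto_natCast_atTop_atTop.eventually h3
  obtain ⟨n₀, hn₀⟩ := eventually_atTop.mp (hev1.and hev2)
  refine ⟨n₀, ?_⟩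
  intro n hn x hx hΓ
  obtain ⟨hL100, hL3⟩ := hn₀ n hn
  have hfacpos : (0:ℝ) < (n.factorial : ℝ) := by exact_mod_cast n.factorial_pos
  set N := (n : ℝ) with hNdef
  set L := Real.log N with hLdef
  set a := Real.log 2 / L with hadef
  set t := N / 2 * (1 + a) with htdef
  set d := 100 * N / L ^ 2 with hddef
  have hL0 : (0:ℝ) < L := by linarith
  have hN6 : (1000000 : ℝ) ≤ N := by
    have h := pow_le_pow_left₀ (by norm_num : (0:ℝ) ≤ 100) hL100 3
    norm_num at h
    linarith
  have hN0 : (0:ℝ) < N := by linarith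
  have hn1 : 1 ≤ n := by
    have h : (1:ℝ) ≤ N := by linarith
    rw [hNdef] at h
    exact_mod_cast h
  -- facts about log n!  (before clearing the definition of L)
  have hlogfac_ub : Real.log (n.factorial) ≤ N * L - N + (1 + L) + 1 := by
    have hl2 : Real.log 2 ≤ 1 := by
      linarith [Real.log_le_sub_one_of_pos (by norm_num : (0:ℝ) < 2)]
    have h1 := log_fact_upper n hn1
    rw [← hNdef, ← hLdef] at h1
    have h2 : Real.log (2 * N) = Real.log 2 + L := by
      rw [Real.log_mul (by norm_num) (ne_of_gt hN0), hLdef]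
    rw [h2] at h1
    linarith
  have hlogfac_lb : N * L - N ≤ Real.log (n.factorial) := by
    have h1 := log_fact_lower n hn1
    rw [← hNdef, ← hLdef] at h1
    linarith
  have hlogN : Real.log N = L := hLdef.symm
  clear_value N L a t d
  have hl2 : (0:ℝ) < Real.log 2 := Real.log_pos one_lt_two
  have hl2' : Real.log 2 ≤ 1 := by
    linarith [Real.log_le_sub_one_of_pos (by norm_num : (0:ℝ) < 2)]
  have haL : a * L = Real.log 2 := by rw [hadef]; exact div_mul_cancel₀ _ (ne_of_gt hL0)
  have ha0 : 0 < a := by rw [hadef]; exact div_pos hl2 hL0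
  have ha : a ≤ 1/100 := by
    rw [hadef, div_le_div_iff₀ hL0 (by norm_num)]; linarith
  have hu : L ≤ N / L ^ 2 := by
    rw [le_div_iff₀ (by positivity)]
    have h : L * L ^ 2 = L ^ 3 := by ring
    rw [h]; exact hL3
  have hu100 : (100:ℝ) ≤ N / L ^ 2 := by linarith
  have hNL : N / L = N / L ^ 2 * L := by field_simp
  have hd100 : d = 100 * (N / L ^ 2) := by rw [hddef]; ring
  have hdL : 100 * L ≤ d := by rw [hd100]; linarith
  have hd1 : (1:ℝ) ≤ d := by linarith
  have hdN : d ≤ N / 100 := by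
    rw [hd100]
    have h1 : N / L ^ 2 ≤ N / 10000 := by
      apply div_le_div_of_nonneg_left (le_of_lt hN0) (by norm_num) (by nlinarith [hL100])
    linarith
  have ht_lb : N / 2 ≤ t := by
    rw [htdef]
    have : 0 ≤ N / 2 * a := by positivity
    linarith [mul_one_add (N/2) a]
  have ht_ub : t ≤ (51/100) * N := by
    rw [htdef]
    nlinarith [hN0, ha0, ha]
  have ht0 : (0:ℝ) < t := by linarith
  have hla0 : 0 ≤ Real.log (1 + a) := Real.log_nonneg (by linarith)
  have hla : Real.log (1 + a) ≤ a := by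
    linarith [Real.log_le_sub_one_of_pos (by linarith : (0:ℝ) < 1 + a)]
  have hlogt : Real.log t = L + Real.log (1 + a) - Real.log 2 := by
    rw [htdef, Real.log_mul (ne_of_gt (by linarith : (0:ℝ) < N / 2))
      (ne_of_gt (by linarith : (0:ℝ) < 1 + a)),
      Real.log_div (ne_of_gt hN0) (by norm_num), hlogN]
    ring
  -- central estimate on 2*(t log t - t)
  have hkey : 2 * (t * Real.log t - t) - (N * L - N)
      = N * ((1 + a) * Real.log (1 + a) - a * (1 + Real.log 2)) := by
    rw [hlogt, htdef]; linear_combination N * haL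
  have hNa : N * a ≤ N / L := by
    rw [le_div_iff₀ hL0, mul_assoc, haL]
    nlinarith [hN0, hl2']
  obtain ⟨hB_ub, hB_lb⟩ := B_bound a (Real.log (1 + a)) (Real.log 2) hla0 hla ha0 ha hl2 hl2'
  have hNB_ub : N * ((1 + a) * Real.log (1 + a) - a * (1 + Real.log 2)) ≤ 2 * (N / L) := by
    have h1 := mul_le_mul_of_nonneg_left hB_ub (le_of_lt hN0)
    have h2 : N * (2 * a) = 2 * (N * a) := by ring
    linarith
  have hNB_lb : -(2 * (N / L)) ≤ N * ((1 + a) * Real.log (1 + a) - a * (1 + Real.log 2)) := by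
    have h1 := mul_le_mul_of_nonneg_left hB_lb (le_of_lt hN0)
    have h2 : N * -(2 * a) = -(2 * (N * a)) := by ring
    linarith
  have hgt_ub : 2 * (t * Real.log t - t) ≤ N * L - N + 2 * (N / L) := by linarith
  have hgt_lb : N * L - N - 2 * (N / L) ≤ 2 * (t * Real.log t - t) := by linarith
  have hlogt_lb : L - 1 ≤ Real.log t := by rw [hlogt]; linarith
  rw [abs_le]
  constructor
  · -- t - d ≤ x
    by_contra hcon
    push_neg at hcon
    have hxlt : x < t - d := by linarith
    set k := ⌈t - d⌉₊ with hkdef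
    have htd0 : (0:ℝ) ≤ t - d := by linarith
    have hk_ge : t - d ≤ (k:ℝ) := Nat.le_ceil _
    have hk_le : (k:ℝ) < t - d + 1 := Nat.ceil_lt_add_one htd0
    have hk3 : (3:ℝ) ≤ (k:ℝ) := by linarith
    have hk0 : (0:ℝ) < (k:ℝ) := by linarith
    have hk1 : 1 ≤ k := by exact_mod_cast (by linarith : (1:ℝ) ≤ (k:ℝ))
    have hΓlt : Real.Gamma (x + 1) < Real.Gamma ((k:ℝ) + 1) := by
      apply Real.Gamma_strictMonoOn_Ici (Set.mem_Ici.mpr (by linarith))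
        (Set.mem_Ici.mpr (by linarith)) (by linarith)
    rw [Real.Gamma_nat_eq_factorial, hΓ] at hΓlt
    have hlogk1 : (1:ℝ) ≤ Real.log k := by
      calc (1:ℝ) = Real.log (rexp 1) := (Real.log_exp 1).symm
        _ ≤ Real.log k := Real.log_le_log (Real.exp_pos 1)
            (by linarith [Real.exp_one_lt_d9])
    have hg1 : (k:ℝ) * Real.log k - k ≤ (t - d + 1) * Real.log (t - d + 1) - (t - d + 1) := by
      have h := gdiff (y := (k:ℝ)) (h := (t - d + 1) - k) (by linarith) (by linarith)
      have he : (k:ℝ) + ((t - d + 1) - k) = t - d + 1 := by ring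
      rw [he] at h
      linarith [h, mul_nonneg (by linarith : (0:ℝ) ≤ t - d + 1 - ↑k)
        (by linarith : (0:ℝ) ≤ Real.log ↑k - 1)]
    have hg2 : (t - d + 1) * Real.log (t - d + 1) - (t - d + 1)
        + (d - 1) * (Real.log (t - d + 1) - 1) ≤ t * Real.log t - t := by
      have h := gdiff (y := t - d + 1) (h := d - 1) (by linarith) (by linarith)
      have he : (t - d + 1) + (d - 1) = t := by ring
      rw [he] at h
      exact h
    have hlogtd : L - 2 ≤ Real.log (t - d + 1) := by
      have h1 : Real.log (N / 3) ≤ Real.log (t - d + 1) := by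
        apply Real.log_le_log (by linarith) (by linarith)
      have h2 : Real.log (N / 3) = L - Real.log 3 := by
        rw [Real.log_div (ne_of_gt hN0) (by norm_num), hlogN]
      have h3 : Real.log 3 ≤ 2 := by
        linarith [Real.log_le_sub_one_of_pos (by norm_num : (0:ℝ) < 3)]
      rw [h2] at h1; linarith
    have hlogfk : Real.log (k.factorial) ≤ (k:ℝ) * Real.log k - k + (1 + L) + 1 := by
      have h1 := log_fact_upper k hk1
      have h2 : Real.log (2 * (k:ℝ)) ≤ Real.log 2 + L := by
        rw [Real.log_mul (by norm_num) (ne_of_gt hk0)]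
        have h3 : Real.log (k:ℝ) ≤ Real.log N := Real.log_le_log hk0 (by linarith)
        rw [hlogN] at h3
        linarith
      linarith
    have hnum : 2 * (N / L) + 2 * L + 4 + 2 ≤ 2 * (d - 1) * (L - 3) := by
      rw [hd100, hNL]
      exact (num_side (N / L ^ 2) L hu100 hL100).1
    have key2 : 2 * Real.log (k.factorial) ≤ Real.log (n.factorial) := by
      have c2 : (d - 1) * (L - 3) ≤ (d - 1) * (Real.log (t - d + 1) - 1) :=
        mul_le_mul_of_nonneg_left (by linarith) (by linarith)
      linarith
    have hkp : (0:ℝ) < (k.factorial : ℝ) := by exact_mod_cast k.factorial_pos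
    have hsq : ((k.factorial : ℝ)) ^ 2 ≤ (n.factorial : ℝ) := by
      have h : Real.log (((k.factorial : ℝ)) ^ 2) ≤ Real.log (n.factorial) := by
        rw [Real.log_pow]; push_cast; linarith
      exact (Real.log_le_log_iff (pow_pos hkp 2) hfacpos).mp h
    have : (k.factorial : ℝ) ≤ Real.sqrt (n.factorial) := by
      rw [show ((k.factorial : ℝ)) = Real.sqrt (((k.factorial : ℝ)) ^ 2) from
        (Real.sqrt_sq (le_of_lt hkp)).symm]
      exact Real.sqrt_le_sqrt hsq
    linarith
  · -- x ≤ t + d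
    by_contra hcon
    push_neg at hcon
    have hxgt : t + d < x := by linarith
    set m := ⌊t + d⌋₊ with hmdef
    have hm_le : (m:ℝ) ≤ t + d := Nat.floor_le (by linarith)
    have hm_ge : t + d - 1 < (m:ℝ) := Nat.sub_one_lt_floor _
    have hm3 : (3:ℝ) ≤ (m:ℝ) := by linarith
    have hm1 : 1 ≤ m := by exact_mod_cast (by linarith : (1:ℝ) ≤ (m:ℝ))
    have hΓlt : Real.Gamma ((m:ℝ) + 1) < Real.Gamma (x + 1) := by
      apply Real.Gamma_strictMonoOn_Ici (Set.mem_Ici.mpr (by linarith))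
        (Set.mem_Ici.mpr (by linarith)) (by linarith)
    rw [Real.Gamma_nat_eq_factorial, hΓ] at hΓlt
    have hlogy1 : (1:ℝ) ≤ Real.log (t + d - 1) := by
      calc (1:ℝ) = Real.log (rexp 1) := (Real.log_exp 1).symm
        _ ≤ Real.log (t + d - 1) := Real.log_le_log (Real.exp_pos 1)
            (by linarith [Real.exp_one_lt_d9])
    have hg1 : (t + d - 1) * Real.log (t + d - 1) - (t + d - 1) ≤ (m:ℝ) * Real.log m - m := by
      have h := gdiff (y := t + d - 1) (h := (m:ℝ) - (t + d - 1)) (by linarith) (by linarith)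
      have he : (t + d - 1) + ((m:ℝ) - (t + d - 1)) = m := by ring
      rw [he] at h
      linarith [h, mul_nonneg (by linarith : (0:ℝ) ≤ ↑m - (t + d - 1))
        (by linarith : (0:ℝ) ≤ Real.log (t + d - 1) - 1)]
    have hg2 : t * Real.log t - t + (d - 1) * (Real.log t - 1)
        ≤ (t + d - 1) * Real.log (t + d - 1) - (t + d - 1) := by
      have h := gdiff (y := t) (h := d - 1) (by linarith) (by linarith)
      have he : t + (d - 1) = t + d - 1 := by ring
      rw [he] at h
      exact h
    have hnum : 2 * (N / L) + (1 + L) + 1 ≤ 2 * (d - 1) * (L - 2) := by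
      rw [hd100, hNL]
      exact (num_side (N / L ^ 2) L hu100 hL100).2
    have key1 : Real.log (n.factorial) ≤ 2 * Real.log (m.factorial) := by
      have c0 := log_fact_lower m hm1
      have c2 : (d - 1) * (L - 2) ≤ (d - 1) * (Real.log t - 1) :=
        mul_le_mul_of_nonneg_left (by linarith) (by linarith)
      linarith
    have hmp : (0:ℝ) < (m.factorial : ℝ) := by exact_mod_cast m.factorial_pos
    have hsq : (n.factorial : ℝ) ≤ ((m.factorial : ℝ)) ^ 2 := by
      have h : Real.log (n.factorial) ≤ Real.log (((m.factorial : ℝ)) ^ 2) := by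
        rw [Real.log_pow]; push_cast; linarith
      exact (Real.log_le_log_iff hfacpos (pow_pos hmp 2)).mp h
    have : Real.sqrt (n.factorial) ≤ (m.factorial : ℝ) := by
      rw [show ((m.factorial : ℝ)) = Real.sqrt (((m.factorial : ℝ)) ^ 2) from
        (Real.sqrt_sq (le_of_lt hmp)).symm]
      exact Real.sqrt_le_sqrt hsq
    linarith
end

section
/- There exists a constant C > 0 such that for every integer n ≥ 2 there are subsets A, B of the symmetric group S_n with AB = S_n (every permutation in S_n is a product ab with a ∈ A, b ∈ B), |A|·|B| = n!, and max(|A|, |B|) ≤ C · n^{1/2} · √(n!). (The sets may be taken as A = a set of n·(n−1)·…·(n−k+1) permutations realizing all possible images of (1, …, k), and B = the subgroup of permutations fixing 1, …, k pointwise, for a suitable choice of k.) -/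
open Equiv

lemma arith (n : ℕ) (hn : 1 ≤ n) :
    ∃ m ≤ n, (Nat.factorial m)^2 ≤ n * n.factorial ∧
      (n.factorial / Nat.factorial m)^2 ≤ n * n.factorial := by
  have hP0 : (Nat.factorial 0)^2 ≤ n * n.factorial := by
    simp [Nat.factorial]
    nlinarith [Nat.one_le_iff_ne_zero.mpr (Nat.factorial_ne_zero n), hn]
  obtain ⟨m, hm, hPm, hgr⟩ : ∃ m ≤ n, (Nat.factorial m)^2 ≤ n * n.factorial ∧
      (m < n → ¬ ((Nat.factorial (m+1))^2 ≤ n * n.factorial)) := by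
    classical
    refine ⟨Nat.findGreatest (fun m => (Nat.factorial m)^2 ≤ n * n.factorial) n,
      Nat.findGreatest_le (P := fun m => (Nat.factorial m)^2 ≤ n * n.factorial) n,
      Nat.findGreatest_spec (P := fun m => (Nat.factorial m)^2 ≤ n * n.factorial)
        (Nat.zero_le n) hP0, fun hlt => ?_⟩
    exact Nat.findGreatest_is_greatest
      (P := fun m => (Nat.factorial m)^2 ≤ n * n.factorial) (Nat.lt_succ_self _) hlt
  refine ⟨m, hm, hPm, ?_⟩
  have hdvd : Nat.factorial m ∣ Nat.factorial n := Nat.factorial_dvd_factorial hm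
  have hfpos : 0 < Nat.factorial m := Nat.factorial_pos m
  rcases eq_or_lt_of_le hm with heq | hlt
  · rw [heq, Nat.div_self (Nat.factorial_pos n), one_pow]
    nlinarith [Nat.one_le_iff_ne_zero.mpr (Nat.factorial_ne_zero n), hn]
  · have hnot : n * n.factorial < (Nat.factorial (m+1))^2 := by
      have := hgr hlt; omega
    have key : (Nat.factorial n)^2 ≤ n * n.factorial * (Nat.factorial m)^2 := by
      have h1 : n * n.factorial * (Nat.factorial m)^2 * (m+1)^2
          = n * n.factorial * (Nat.factorial (m+1))^2 := by
        rw [Nat.factorial_succ]; ring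
      have h2 : n * n.factorial * (n * n.factorial)
          ≤ n * n.factorial * (Nat.factorial (m+1))^2 :=
        Nat.mul_le_mul_left _ (le_of_lt hnot)
      have h3 : (Nat.factorial n)^2 * (m+1)^2 ≤ n * n.factorial * (n * n.factorial) := by
        have hmn : m + 1 ≤ n := hlt
        calc (Nat.factorial n)^2 * (m+1)^2 = (Nat.factorial n * (m+1))^2 := by ring
          _ ≤ (Nat.factorial n * n)^2 :=
              Nat.pow_le_pow_left (Nat.mul_le_mul_left _ hmn) 2
          _ = n * n.factorial * (n * n.factorial) := by ring
      have h4 := h3.trans h2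
      rw [← h1] at h4
      exact Nat.le_of_mul_le_mul_right h4 (by positivity)
    obtain ⟨c, hc⟩ := hdvd
    have hcd : Nat.factorial n / Nat.factorial m = c := by
      rw [hc]; exact Nat.mul_div_cancel_left _ hfpos
    rw [hcd]
    have h5 : c^2 * (Nat.factorial m)^2 ≤ n * n.factorial * (Nat.factorial m)^2 := by
      calc c^2 * (Nat.factorial m)^2 = (Nat.factorial n)^2 := by rw [hc]; ring
        _ ≤ n * n.factorial * (Nat.factorial m)^2 := key
    exact Nat.le_of_mul_le_mul_right h5 (by positivity)

lemma cosets {G : Type*} [Group G] [Finite G] (H : Subgroup G) :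
    ∃ A B : Finset G, (∀ g : G, ∃ a ∈ A, ∃ b ∈ B, a * b = g) ∧
      A.card * B.card = Nat.card G ∧ B.card = Nat.card H := by
  classical
  haveI : Fintype G := Fintype.ofFinite G
  haveI : Fintype (G ⧸ H) := Fintype.ofFinite _
  refine ⟨Finset.image Quotient.out (Finset.univ : Finset (G ⧸ H)),
    (H : Set G).toFinset, ?_, ?_, ?_⟩
  · intro g
    refine ⟨(QuotientGroup.mk g : G ⧸ H).out, Finset.mem_image_of_mem _ (Finset.mem_univ _),
      ((QuotientGroup.mk g : G ⧸ H).out)⁻¹ * g, ?_, by group⟩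
    rw [Set.mem_toFinset]
    have h : (QuotientGroup.mk ((QuotientGroup.mk g : G ⧸ H).out) : G ⧸ H) = QuotientGroup.mk g :=
      Quotient.out_eq _
    exact (QuotientGroup.eq (s := H)).mp h
  · rw [Finset.card_image_of_injective _ Quotient.out_injective, Finset.card_univ,
      ← Nat.card_eq_fintype_card, Set.toFinset_card, ← Nat.card_eq_fintype_card]
    have h := Subgroup.card_mul_index H
    rw [mul_comm, Subgroup.index] at h
    convert h using 3 <;> rfl
  · rw [Set.toFinset_card, ← Nat.card_eq_fintype_card]
    rfl

/-- There is a constant `C > 0` such that for every `n ≥ 2` there are subsets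
`A, B` of the symmetric group `Sₙ` with `AB = Sₙ`, `|A|·|B| = n!`, and
`max(|A|, |B|) ≤ C · n^(1/2) · √(n!)`. -/
theorem stmt6 : ∃ C : ℝ, 0 < C ∧ ∀ n : ℕ, 2 ≤ n →
    ∃ A B : Finset (Equiv.Perm (Fin n)),
      (∀ g : Equiv.Perm (Fin n), ∃ a ∈ A, ∃ b ∈ B, a * b = g) ∧
      A.card * B.card = n.factorial ∧
      ((max A.card B.card : ℕ) : ℝ) ≤ C * Real.sqrt n * Real.sqrt n.factorial := by
  classical
  refine ⟨1, one_pos, fun n hn => ?_⟩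
  obtain ⟨m, hm, hm1, hm2⟩ := arith n (by omega)
  let ι : Fin m ↪ Fin n := Fin.castLEEmb hm
  let φ : Perm (Fin m) →* Perm (Fin n) := Perm.viaEmbeddingHom ι
  have hφ : Function.Injective φ := Perm.viaEmbeddingHom_injective ι
  let H : Subgroup (Perm (Fin n)) := φ.range
  have hcardH : Nat.card H = Nat.factorial m := by
    have h1 : Nat.card (Set.range φ) = Nat.card (Perm (Fin m)) :=
      Nat.card_range_of_injective hφ
    have h2 : Nat.card H = Nat.card (Set.range φ) := rfl
    rw [h2, h1, Nat.card_eq_fintype_card, Fintype.card_perm, Fintype.card_fin]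
  obtain ⟨A, B, hcover, hcard, hB⟩ := cosets H
  have hG : Nat.card (Perm (Fin n)) = Nat.factorial n := by
    rw [Nat.card_eq_fintype_card, Fintype.card_perm, Fintype.card_fin]
  rw [hG] at hcard
  rw [hcardH] at hB
  refine ⟨A, B, hcover, by rw [hcard], ?_⟩
  have hfpos : 0 < Nat.factorial m := Nat.factorial_pos m
  have hA : A.card = Nat.factorial n / Nat.factorial m := by
    have h' : A.card * Nat.factorial m = Nat.factorial n := by rw [← hB]; exact hcard
    rw [← h', Nat.mul_div_cancel _ hfpos]
  have key : ∀ x : ℕ, x^2 ≤ n * n.factorial →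
      (x : ℝ) ≤ 1 * Real.sqrt n * Real.sqrt n.factorial := by
    intro x hx
    have h : (x : ℝ)^2 ≤ (n : ℝ) * (n.factorial : ℝ) := by exact_mod_cast hx
    calc (x:ℝ) = Real.sqrt ((x:ℝ)^2) := (Real.sqrt_sq (by positivity)).symm
      _ ≤ Real.sqrt ((n:ℝ) * (n.factorial:ℝ)) := Real.sqrt_le_sqrt h
      _ = Real.sqrt n * Real.sqrt n.factorial := Real.sqrt_mul (by positivity) _
      _ = 1 * Real.sqrt n * Real.sqrt n.factorial := by ring
  rcases max_cases A.card B.card with ⟨h, _⟩ | ⟨h, _⟩ <;> rw [h]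
  · rw [hA]; exact key _ hm2
  · rw [hB]; exact key _ hm1
end

section
/- Let n ≥ 2 and let m be an integer with 1 ≤ m < n!. Let x be the largest integer such that x! ≤ m (so x! ≤ m < (x+1)! and x < n). Set α = max(√2, √((x+1)/(n−x))). Then there exists a subgroup H of S_n with m/α ≤ |H| ≤ α·m. (Such an H can be taken of the form generated by the copy of S_k on {1,…,k} and an ℓ-cycle on {k+1,…,k+ℓ}, with k + ℓ ≤ n.) -/
open Equiv

/-- subgroup of `S_n` of order `k! * l` when `k + l ≤ n`, `1 ≤ l`. -/
lemma exists_subgroup_card (n k l : ℕ) (hl : 1 ≤ l) (h : k + l ≤ n) :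
    ∃ H : Subgroup (Equiv.Perm (Fin n)), Nat.card H = k.factorial * l := by
  haveI : NeZero l := ⟨by omega⟩
  set G := Equiv.Perm (Fin k) × Multiplicative (ZMod l) with hG
  have hcardG : Nat.card G = k.factorial * l := by
    rw [Nat.card_prod]
    congr 1
    · simp [Nat.card_eq_fintype_card, Fintype.card_perm]
    · rw [Nat.card_congr (Multiplicative.toAdd (α := ZMod l))]
      simp [Nat.card_eq_fintype_card]
  have hcard : Fintype.card (Fin k ⊕ Multiplicative (ZMod l)) ≤ Fintype.card (Fin n) := by
    simp [Fintype.card_sum]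
    omega
  obtain ⟨e⟩ := Function.Embedding.nonempty_of_card_le hcard
  let cayley : Multiplicative (ZMod l) →* Equiv.Perm (Multiplicative (ZMod l)) :=
    MulAction.toPermHom _ _
  let f : G →* Equiv.Perm (Fin n) :=
    (Equiv.Perm.viaEmbeddingHom e).comp
      ((Equiv.Perm.sumCongrHom _ _).comp ((MonoidHom.id _).prodMap cayley))
  have hf : Function.Injective f := by
    apply (Equiv.Perm.viaEmbeddingHom_injective e).comp
    apply Equiv.Perm.sumCongrHom_injective.comp
    exact Function.Injective.prodMap (fun a b h => h) MulAction.toPerm_injective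
  refine ⟨f.range, ?_⟩
  rw [← hcardG]
  exact Nat.card_congr (Equiv.ofInjective f hf).symm

/-- subgroup of `S_n` of order `k!` when `k ≤ n`. -/
lemma exists_subgroup_card' (n k : ℕ) (h : k ≤ n) :
    ∃ H : Subgroup (Equiv.Perm (Fin n)), Nat.card H = k.factorial := by
  obtain ⟨e⟩ := Function.Embedding.nonempty_of_card_le
    (by simpa using h : Fintype.card (Fin k) ≤ Fintype.card (Fin n))
  refine ⟨(Equiv.Perm.viaEmbeddingHom e).range, ?_⟩
  refine Eq.trans (Nat.card_congr (Equiv.ofInjective _ (Equiv.Perm.viaEmbeddingHom_injective e)).symm) ?_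
  simp [Nat.card_eq_fintype_card, Fintype.card_perm]

/-- helper: `a² ≤ k·b²` implies `a ≤ √k · b`. -/
lemma sq_helper (a b k : ℝ) (ha : 0 ≤ a) (hb : 0 ≤ b) (hk : 0 ≤ k)
    (h : a ^ 2 ≤ k * b ^ 2) : a ≤ Real.sqrt k * b := by
  have := Real.sqrt_le_sqrt h
  rwa [Real.sqrt_sq ha, Real.sqrt_mul hk, Real.sqrt_sq hb] at this

lemma pair1 (m c α β : ℝ) (hα : 1 ≤ α) (hβα : β ≤ α) (hcm : c ≤ m) (hmc : m ≤ β * c)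
    (hc : 0 ≤ c) : m / α ≤ c ∧ c ≤ α * m := by
  have hm : 0 ≤ m := le_trans hc hcm
  constructor
  · rw [div_le_iff₀ (by linarith)]
    calc m ≤ β * c := hmc
    _ ≤ α * c := by nlinarith
    _ = c * α := mul_comm _ _
  · calc c ≤ m := hcm
    _ ≤ α * m := by nlinarith

lemma pair2 (m c α β : ℝ) (hα : 1 ≤ α) (hβα : β ≤ α) (hm : 0 ≤ m) (hmc : m ≤ c)
    (hcb : c ≤ β * m) : m / α ≤ c ∧ c ≤ α * m := by
  constructor
  · have : m / α ≤ m := div_le_self hm hα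
    linarith
  · calc c ≤ β * m := hcb
    _ ≤ α * m := mul_le_mul_of_nonneg_right hβα hm

/-- Let `n ≥ 2` and `1 ≤ m < n!`.  Let `x` be the largest integer with
`x! ≤ m` (equivalently, `x! ≤ m < (x+1)!`).  Set
`α = max(√2, √((x+1)/(n−x)))`.  Then `Sₙ` has a subgroup `H` with
`m/α ≤ |H| ≤ α·m`. -/
theorem stmt10 (n m x : ℕ) (hn : 2 ≤ n) (hm1 : 1 ≤ m) (hm2 : m < n.factorial)
    (hx1 : x.factorial ≤ m) (hx2 : m < (x + 1).factorial) :
    ∃ H : Subgroup (Equiv.Perm (Fin n)),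
      (m : ℝ) / max (Real.sqrt 2) (Real.sqrt (((x : ℝ) + 1) / ((n : ℝ) - x))) ≤
        Nat.card H ∧
      (Nat.card H : ℝ) ≤
        max (Real.sqrt 2) (Real.sqrt (((x : ℝ) + 1) / ((n : ℝ) - x))) * m := by
  have hfac : 0 < x.factorial := x.factorial_pos
  have hxn : x < n := by
    by_contra h
    push_neg at h
    exact absurd (le_trans (Nat.factorial_le h) hx1) (not_le.mpr hm2)
  set N := n - x with hN
  have hN1 : 1 ≤ N := by omega
  set q := m / x.factorial with hq
  have hq1 : 1 ≤ q := (Nat.one_le_div_iff hfac).mpr hx1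
  have hqx : q ≤ x := by
    have h1 : m < (x + 1) * x.factorial := by
      rw [← Nat.factorial_succ]; exact hx2
    exact Nat.lt_succ_iff.mp ((Nat.div_lt_iff_lt_mul hfac).mpr h1)
  have hqm : q * x.factorial ≤ m := Nat.div_mul_le_self m _
  have hmq : m < (q + 1) * x.factorial := by
    have h1 : q * x.factorial + m % x.factorial = m := by
      rw [mul_comm]; exact Nat.div_add_mod m x.factorial
    have h2 := Nat.mod_lt m hfac
    have h3 : (q + 1) * x.factorial = q * x.factorial + x.factorial := by ring
    omega
  set α := max (Real.sqrt 2) (Real.sqrt (((x : ℝ) + 1) / ((n : ℝ) - x))) with hαdef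
  have hsqrt2 : (1 : ℝ) ≤ Real.sqrt 2 := by
    rw [show (1 : ℝ) = Real.sqrt 1 from Real.sqrt_one.symm]
    exact Real.sqrt_le_sqrt one_le_two
  have hα1 : (1 : ℝ) ≤ α := le_trans hsqrt2 (le_max_left _ _)
  have hcastN : ((n : ℝ) - x) = (N : ℝ) := by
    rw [hN, Nat.cast_sub hxn.le]
  have hs : Real.sqrt (((x : ℝ) + 1) / (N : ℝ)) ≤ α := by
    rw [hαdef, hcastN]; exact le_max_right _ _
  have hNpos : (0 : ℝ) < (N : ℝ) := by exact_mod_cast hN1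
  have hmpos : (0 : ℝ) ≤ (m : ℝ) := Nat.cast_nonneg m
  by_cases hcase : q + 1 ≤ N
  · by_cases hA : m ^ 2 ≤ q * (q + 1) * x.factorial ^ 2
    · obtain ⟨H, hH⟩ := exists_subgroup_card n x q hq1 (by omega)
      refine ⟨H, ?_⟩
      rw [hH]
      refine pair1 _ _ _ (Real.sqrt 2) hα1 (le_max_left _ _) ?_ ?_ (by positivity)
      · exact_mod_cast (by rw [mul_comm]; exact hqm : x.factorial * q ≤ m)
      · refine sq_helper _ _ _ hmpos (by positivity) (by norm_num) ?_
        have hnat : m ^ 2 ≤ 2 * (x.factorial * q) ^ 2 := by nlinarith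
        exact_mod_cast hnat
    · push_neg at hA
      obtain ⟨H, hH⟩ := exists_subgroup_card n x (q + 1) (by omega) (by omega)
      refine ⟨H, ?_⟩
      rw [hH]
      refine pair2 _ _ _ (Real.sqrt 2) hα1 (le_max_left _ _) hmpos ?_ ?_
      · have hnat : m ≤ x.factorial * (q + 1) := by rw [mul_comm]; exact hmq.le
        exact_mod_cast hnat
      · refine sq_helper _ _ _ (by positivity) hmpos (by norm_num) ?_
        have hnat : (x.factorial * (q + 1)) ^ 2 ≤ 2 * m ^ 2 := by nlinarith
        exact_mod_cast hnat
  · push_neg at hcase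
    by_cases hB : m ^ 2 ≤ N * (x + 1) * x.factorial ^ 2
    · obtain ⟨H, hH⟩ := exists_subgroup_card n x N hN1 (by omega)
      refine ⟨H, ?_⟩
      rw [hH]
      refine pair1 _ _ _ (Real.sqrt (((x : ℝ) + 1) / (N : ℝ))) hα1 hs ?_ ?_ (by positivity)
      · have hnat : x.factorial * N ≤ m := by
          calc x.factorial * N ≤ x.factorial * q := Nat.mul_le_mul_left _ (by omega)
          _ = q * x.factorial := mul_comm _ _
          _ ≤ m := hqm
        exact_mod_cast hnat
      · refine sq_helper _ _ _ hmpos (by positivity) (by positivity) ?_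
        rw [div_mul_eq_mul_div, le_div_iff₀ hNpos]
        have hnat : m ^ 2 * N ≤ (x + 1) * (x.factorial * N) ^ 2 := by
          calc m ^ 2 * N ≤ N * (x + 1) * x.factorial ^ 2 * N := Nat.mul_le_mul_right _ hB
          _ = (x + 1) * (x.factorial * N) ^ 2 := by ring
        exact_mod_cast hnat
    · push_neg at hB
      obtain ⟨H, hH⟩ := exists_subgroup_card' n (x + 1) (by omega)
      refine ⟨H, ?_⟩
      rw [hH]
      refine pair2 _ _ _ (Real.sqrt (((x : ℝ) + 1) / (N : ℝ))) hα1 hs hmpos ?_ ?_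
      · exact_mod_cast hx2.le
      · refine sq_helper _ _ _ (by positivity) hmpos (by positivity) ?_
        rw [div_mul_eq_mul_div, le_div_iff₀ hNpos]
        have hnat : (x + 1).factorial ^ 2 * N ≤ (x + 1) * m ^ 2 := by
          calc (x + 1).factorial ^ 2 * N = (x + 1) * (N * (x + 1) * x.factorial ^ 2) := by
                rw [Nat.factorial_succ]; ring
          _ ≤ (x + 1) * m ^ 2 := Nat.mul_le_mul_left _ hB.le
        calc ((x + 1).factorial : ℝ) ^ 2 * (N : ℝ)
            ≤ ((x : ℝ) + 1) * (m : ℝ) ^ 2 := by exact_mod_cast hnat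
        _ = ((x : ℝ) + 1) * (m : ℝ) ^ 2 := rfl
end

section
/- For every integer n ≥ 7, there exists a subgroup H of the symmetric group S_n whose order satisfies √(n!)/√2 ≤ |H| ≤ √(2·n!). In particular, S_n has a subgroup of order Θ(√(n!)). -/
lemma two_pow_dvd_fact (j : ℕ) : 2 ^ j ∣ (2 * j).factorial := by
  induction j with
  | zero => simp
  | succ j ih =>
    have h : 2 * (j + 1) = (2 * j + 1) + 1 := by ring
    rw [h, Nat.factorial_succ, Nat.factorial_succ, pow_succ, mul_comm (2 ^ j) 2]
    exact mul_dvd_mul ⟨j + 1, by ring⟩ (ih.mul_left _)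

lemma exists_perm_subgroup (n a j : ℕ) (h : a + 2 * j ≤ n) :
    ∃ H : Subgroup (Equiv.Perm (Fin n)), Nat.card H = a.factorial * 2 ^ j := by
  haveI : Fact (Nat.Prime 2) := ⟨Nat.prime_two⟩
  have hdvd : 2 ^ j ∣ Nat.card (Equiv.Perm (Fin (2 * j))) := by
    rw [Nat.card_eq_fintype_card, Fintype.card_perm, Fintype.card_fin]
    exact two_pow_dvd_fact j
  obtain ⟨P, hP⟩ := Sylow.exists_subgroup_card_pow_prime 2 hdvd
  set ι : (Fin a ⊕ Fin (2 * j)) ↪ Fin n :=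
    (finSumFinEquiv.toEmbedding).trans (Fin.castLEEmb h) with hι
  set f : Equiv.Perm (Fin a) × Equiv.Perm (Fin (2 * j)) →* Equiv.Perm (Fin n) :=
    (Equiv.Perm.viaEmbeddingHom ι).comp (Equiv.Perm.sumCongrHom _ _) with hf
  have hfinj : Function.Injective f :=
    (Equiv.Perm.viaEmbeddingHom_injective ι).comp (Equiv.Perm.sumCongrHom_injective)
  refine ⟨Subgroup.map f ((⊤ : Subgroup (Equiv.Perm (Fin a))).prod P), ?_⟩
  rw [← Nat.card_congr (Subgroup.equivMapOfInjective _ f hfinj).toEquiv,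
    Nat.card_congr (Subgroup.prodEquiv _ _).toEquiv, Nat.card_prod,
    Subgroup.card_top, hP, Nat.card_eq_fintype_card, Fintype.card_perm, Fintype.card_fin]

lemma exists_perm_subgroup_half (n a : ℕ) (h2 : 2 ≤ a) (h : a ≤ n) :
    ∃ H : Subgroup (Equiv.Perm (Fin n)), 2 * Nat.card H = a.factorial := by
  haveI : Nontrivial (Fin a) :=
    ⟨⟨⟨0, by omega⟩, ⟨1, by omega⟩, by simp [Fin.ext_iff]⟩⟩
  set ι : Fin a ↪ Fin n := (Fin.castLEEmb h) with hι
  have hfinj := Equiv.Perm.viaEmbeddingHom_injective ι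
  refine ⟨Subgroup.map (Equiv.Perm.viaEmbeddingHom ι) (alternatingGroup (Fin a)), ?_⟩
  rw [← Nat.card_congr (Subgroup.equivMapOfInjective _ _ hfinj).toEquiv,
    Nat.card_eq_fintype_card, two_mul_card_alternatingGroup, Fintype.card_perm,
    Fintype.card_fin]

lemma l16 : ∀ a, 5 ≤ a → 16 * a < a.factorial := by
  intro a ha
  induction a with
  | zero => omega
  | succ b ih =>
    rcases Nat.lt_or_ge b 5 with hb | hb
    · interval_cases b <;> simp_all [Nat.factorial] <;> omega
    · have h := ih (by omega)
      rw [Nat.factorial_succ]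
      have hb1 : 1 ≤ b.factorial := Nat.one_le_iff_ne_zero.mpr b.factorial_ne_zero
      nlinarith

lemma pow_le_aux (a k : ℕ) (hk : k ≤ a) (ha : 3 ≤ a) : (a + 1) ^ k ≤ a ^ (k + 1) := by
  have ha0 : (0:ℝ) < a := by positivity
  have h1 : ((a:ℝ) + 1) ^ k ≤ 3 * (a:ℝ) ^ k := by
    have he : (1 + 1 / (a:ℝ)) ^ k ≤ 3 := by
      have h2 : (1 + 1 / (a:ℝ)) ≤ Real.exp (1 / a) := by
        have := Real.add_one_le_exp (1 / (a:ℝ)); linarith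
      calc (1 + 1 / (a:ℝ)) ^ k ≤ (Real.exp (1 / a)) ^ k := by
            apply pow_le_pow_left₀ (by positivity) h2
        _ = Real.exp (k / a) := by rw [← Real.exp_nat_mul]; ring_nf
        _ ≤ Real.exp 1 := by
            apply Real.exp_le_exp.mpr
            rw [div_le_one ha0]; exact_mod_cast hk
        _ ≤ 3 := by have := Real.exp_one_lt_d9; linarith
    have : ((a:ℝ) + 1) ^ k = (a:ℝ) ^ k * (1 + 1 / a) ^ k := by
      rw [← mul_pow]; field_simp
    rw [this]
    nlinarith [pow_pos ha0 k, pow_nonneg (le_of_lt ha0) k]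
  have h3 : 3 * (a:ℝ) ^ k ≤ (a:ℝ) ^ (k + 1) := by
    rw [pow_succ]
    nlinarith [pow_pos ha0 k, (show (3:ℝ) ≤ a by exact_mod_cast ha)]
  exact_mod_cast h1.trans h3

lemma row_step (a l : ℕ) (ha3 : 3 ≤ a) (hla : l ≤ a)
    (h : 8 * (2 * a) ^ (l + 1) < a.factorial) :
    8 * (2 * (a + 1)) ^ (l + 1) < (a + 1).factorial := by
  have key : (2 * (a + 1)) ^ (l + 1) ≤ (a + 1) * (2 * a) ^ (l + 1) := by
    have h1 : (a + 1) ^ l ≤ a ^ (l + 1) := pow_le_aux a l hla ha3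
    calc (2 * (a + 1)) ^ (l + 1) = 2 ^ (l + 1) * ((a + 1) ^ l * (a + 1)) := by
          rw [mul_pow]; ring
      _ ≤ 2 ^ (l + 1) * (a ^ (l + 1) * (a + 1)) := by
          exact Nat.mul_le_mul_left _ (Nat.mul_le_mul_right _ h1)
      _ = (a + 1) * (2 * a) ^ (l + 1) := by rw [mul_pow]; ring
  calc 8 * (2 * (a + 1)) ^ (l + 1) ≤ 8 * ((a + 1) * (2 * a) ^ (l + 1)) :=
        Nat.mul_le_mul_left 8 key
    _ = (a + 1) * (8 * (2 * a) ^ (l + 1)) := by ring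
    _ < (a + 1) * a.factorial := (mul_lt_mul_iff_right₀ (by omega : 0 < a + 1)).mpr h
    _ = (a + 1).factorial := (Nat.factorial_succ a).symm

lemma fact_lb (b c : ℕ) : b.factorial * b ^ c ≤ (b + c).factorial := by
  induction c with
  | zero => simp
  | succ c ih =>
    have : b + (c + 1) = (b + c) + 1 := by ring
    rw [this, Nat.factorial_succ, pow_succ, ← mul_assoc]
    calc b.factorial * b ^ c * b ≤ (b + c).factorial * b := Nat.mul_le_mul_right _ ih
      _ ≤ (b + c + 1) * (b + c).factorial := by
          rw [mul_comm]; exact Nat.mul_le_mul_right _ (by omega)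

lemma fact_ub (a : ℕ) : ∀ k, k ≤ a → (a + k).factorial ≤ a.factorial * (2 * a) ^ k := by
  intro k
  induction k with
  | zero => simp
  | succ k ih =>
    intro hk
    have : a + (k + 1) = (a + k) + 1 := by ring
    rw [this, Nat.factorial_succ, pow_succ, ← mul_assoc]
    calc (a + k + 1) * (a + k).factorial ≤ (2 * a) * ((a.factorial) * (2 * a) ^ k) := by
          exact Nat.mul_le_mul (by omega) (ih (by omega))
      _ = a.factorial * (2 * a) ^ k * (2 * a) := by ring

lemma two_mul_le_pow (j : ℕ) : 2 * j ≤ 2 ^ (j + 1) := by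
  have := Nat.lt_two_pow_self (n := j)
  calc 2 * j ≤ 2 * (2 ^ j) := by omega
    _ = 2 ^ (j + 1) := by rw [pow_succ]; ring

lemma key_lemma : ∀ a, ∀ j, 5 ≤ a → 2 ^ (j + 2) ≤ a → 8 * (2 * a) ^ (2 * j + 1) < a.factorial := by
  intro a
  induction a using Nat.strong_induction_on with
  | _ a IH =>
    intro j ha5 hpow
    match j with
    | 0 =>
      have := l16 a ha5
      calc 8 * (2 * a) ^ (2 * 0 + 1) = 16 * a := by ring
        _ < a.factorial := this
    | (i + 1) =>
      have e0 : i + 1 + 2 = i + 3 := by omega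
      rw [e0] at hpow
      by_cases hcase : 2 ^ (i + 3) = a
      · -- column base
        match i with
        | 0 =>
          have : a = 8 := by omega
          subst this
          norm_num [Nat.factorial]
        | (i + 1) =>
          have hcase' : 2 ^ (i + 4) = a := by rw [← hcase]
          clear hcase hpow e0
          have hm5 : 5 ≤ 2 ^ (i + 3) := by
            have : 2 ^ 3 ≤ 2 ^ (i + 3) := Nat.pow_le_pow_right (by omega) (by omega)
            omega
          have hmlt : 2 ^ (i + 3) < a := by
            have h1 : (2:ℕ) ^ (i + 4) = 2 ^ (i + 3) * 2 := by ring
            have h2 : 0 < (2:ℕ) ^ (i + 3) := by positivity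
            omega
          have hIH : 8 * (2 * 2 ^ (i + 3)) ^ (2 * (i + 1) + 1) < (2 ^ (i + 3)).factorial :=
            IH (2 ^ (i + 3)) hmlt (i + 1) hm5 (Nat.pow_le_pow_right (by omega) (by omega))
          have hIH' : 8 * 2 ^ ((i + 4) * (2 * (i + 1) + 1)) < (2 ^ (i + 3)).factorial := by
            have h1 : 2 * 2 ^ (i + 3) = 2 ^ (i + 4) := by ring
            rw [h1, ← pow_mul] at hIH
            exact hIH
          have hlb : (2 ^ (i + 3)).factorial * (2 ^ (i + 3)) ^ (2 ^ (i + 3)) ≤ a.factorial := by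
            have h2 : 2 ^ (i + 3) + 2 ^ (i + 3) = a := by rw [← hcase']; ring
            calc (2 ^ (i + 3)).factorial * (2 ^ (i + 3)) ^ (2 ^ (i + 3))
                ≤ (2 ^ (i + 3) + 2 ^ (i + 3)).factorial := fact_lb _ _
              _ = a.factorial := by rw [h2]
          have h8 : 8 ≤ 2 ^ (i + 3) := by
            have : (2:ℕ) ^ 3 ≤ 2 ^ (i + 3) := Nat.pow_le_pow_right (by omega) (by omega)
            omega
          have hexp : (i + 5) * (2 * (i + 1 + 1) + 1) ≤ (i + 4) * (2 * (i + 1) + 1) + (i + 3) * 2 ^ (i + 3) := by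
            have h9 : (i + 3) * 8 ≤ (i + 3) * 2 ^ (i + 3) := Nat.mul_le_mul_left _ h8
            nlinarith
          have ha2 : 2 * a = 2 ^ (i + 5) := by rw [← hcase']; ring
          calc 8 * (2 * a) ^ (2 * (i + 1 + 1) + 1)
              = 8 * 2 ^ ((i + 5) * (2 * (i + 1 + 1) + 1)) := by rw [ha2, ← pow_mul]
            _ ≤ 8 * 2 ^ ((i + 4) * (2 * (i + 1) + 1) + (i + 3) * 2 ^ (i + 3)) :=
                Nat.mul_le_mul_left 8 (Nat.pow_le_pow_right (by omega) hexp)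
            _ = (8 * 2 ^ ((i + 4) * (2 * (i + 1) + 1))) * (2 ^ (i + 3)) ^ (2 ^ (i + 3)) := by
                rw [pow_add, ← mul_assoc, ← pow_mul]
            _ < (2 ^ (i + 3)).factorial * (2 ^ (i + 3)) ^ (2 ^ (i + 3)) :=
                (mul_lt_mul_iff_left₀ (by positivity)).mpr hIH'
            _ ≤ a.factorial := hlb
      · -- step within column: a > 2^(i+3)
        have h8 : 8 ≤ 2 ^ (i + 3) := by
          have : (2:ℕ) ^ 3 ≤ 2 ^ (i + 3) := Nat.pow_le_pow_right (by omega) (by omega)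
          omega
        obtain ⟨b, rfl⟩ : ∃ b, a = b + 1 := ⟨a - 1, by omega⟩
        have hb : 2 ^ (i + 3) ≤ b := by omega
        have hIH : 8 * (2 * b) ^ (2 * (i + 1) + 1) < b.factorial :=
          IH b (by omega) (i + 1) (by omega) (by rw [e0]; exact hb)
        have h2l : 2 * (i + 1) ≤ b := by
          have := two_mul_le_pow (i + 1)
          have h3 : 2 ^ (i + 1 + 1) ≤ 2 ^ (i + 3) := Nat.pow_le_pow_right (by omega) (by omega)
          omega
        exact row_step b (2 * (i + 1)) (by omega) h2l hIH

lemma four_pow (i : ℕ) : (4:ℕ) ^ i = 2 ^ (2 * i) := by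
  rw [show (4:ℕ) = 2 ^ 2 from rfl, ← pow_mul]

lemma findG (n : ℕ) (hn : 7 ≤ n) :
    ∃ a, 5 ≤ a ∧ a ≤ n ∧ a.factorial ^ 2 ≤ 8 * n.factorial ∧
      8 * n.factorial < (a + 1) ^ 2 * a.factorial ^ 2 := by
  have hF5040 : 5040 ≤ n.factorial := by
    have h := Nat.factorial_le hn
    norm_num [Nat.factorial] at h
    omega
  have hP5 : (Nat.factorial 5) ^ 2 ≤ 8 * n.factorial := by
    norm_num [Nat.factorial]; omega
  refine ⟨Nat.findGreatest (fun m => m.factorial ^ 2 ≤ 8 * n.factorial) n,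
    Nat.le_findGreatest (P := fun m => m.factorial ^ 2 ≤ 8 * n.factorial) (by omega) hP5,
    Nat.findGreatest_le n,
    Nat.findGreatest_spec (P := fun m => m.factorial ^ 2 ≤ 8 * n.factorial)
      (m := 5) (by omega) hP5, ?_⟩
  set a := Nat.findGreatest (fun m => m.factorial ^ 2 ≤ 8 * n.factorial) n with ha
  have ha5 : 5 ≤ a := Nat.le_findGreatest (P := fun m => m.factorial ^ 2 ≤ 8 * n.factorial)
    (by omega) hP5
  have haP : a.factorial ^ 2 ≤ 8 * n.factorial :=
    Nat.findGreatest_spec (P := fun m => m.factorial ^ 2 ≤ 8 * n.factorial) (m := 5)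
      (by omega) hP5
  have han : a ≤ n := Nat.findGreatest_le n
  have hsq : (a + 1).factorial ^ 2 = (a + 1) ^ 2 * a.factorial ^ 2 := by
    rw [Nat.factorial_succ]; ring
  rcases eq_or_lt_of_le han with h | h
  · have h0 : n.factorial ≤ a.factorial := by rw [h]
    nlinarith [Nat.factorial_pos a]
  · have h2 := Nat.findGreatest_is_greatest
      (P := fun m => m.factorial ^ 2 ≤ 8 * n.factorial)
      (show a < a + 1 by omega) (by omega : a + 1 ≤ n)
    simp only [not_le] at h2
    rw [← hsq]
    exact h2

lemma select (n : ℕ) (hn : 7 ≤ n) :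
    ∃ H : Subgroup (Equiv.Perm (Fin n)),
      n.factorial ≤ 2 * (Nat.card H) ^ 2 ∧ (Nat.card H) ^ 2 ≤ 2 * n.factorial := by
  obtain ⟨a, ha5, han, haP, hmax⟩ := findG n hn
  set F := n.factorial with hF
  have hfaca : 1 ≤ a.factorial := a.factorial_pos
  by_cases hhalf : 2 * F ≤ a.factorial ^ 2
  · obtain ⟨d, hd⟩ : 2 ∣ a.factorial := Nat.dvd_factorial (by omega) (by omega)
    obtain ⟨H, hH⟩ := exists_perm_subgroup_half n a (by omega) han
    refine ⟨H, ?_, ?_⟩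
    · have hcard : Nat.card H = d := by omega
      rw [hcard]
      have h4 : a.factorial ^ 2 = 4 * d ^ 2 := by rw [hd]; ring
      linarith
    · have hcard : Nat.card H = d := by omega
      rw [hcard]
      have h4 : a.factorial ^ 2 = 4 * d ^ 2 := by rw [hd]; ring
      linarith
  · push_neg at hhalf
    have hex : ∃ j, F ≤ 2 * a.factorial ^ 2 * 4 ^ j := by
      refine ⟨F, ?_⟩
      have h1 : F < 4 ^ F := Nat.lt_pow_self (n := F) (by omega)
      have h2 : 4 ^ F ≤ 2 * a.factorial ^ 2 * 4 ^ F :=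
        Nat.le_mul_of_pos_left _ (by positivity)
      omega
    rcases hfind : Nat.find hex with _ | i
    · have hjspec := Nat.find_spec hex
      rw [hfind] at hjspec
      norm_num at hjspec
      obtain ⟨H, hH⟩ := exists_perm_subgroup n a 0 (by omega)
      rw [pow_zero, mul_one] at hH
      exact ⟨H, by rw [hH]; linarith, by rw [hH]; linarith⟩
    · have hjspec := Nat.find_spec hex
      rw [hfind] at hjspec
      have hmin : 2 * a.factorial ^ 2 * 4 ^ i < F := by
        have := Nat.find_min hex (show i < Nat.find hex by omega)
        omega
      have h2pow : 2 ^ (i + 2) ≤ a := by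
        have hc : 16 * 4 ^ i * a.factorial ^ 2 < (a + 1) ^ 2 * a.factorial ^ 2 := by
          nlinarith
        have hc2 : 16 * 4 ^ i < (a + 1) ^ 2 := Nat.lt_of_mul_lt_mul_right hc
        by_contra hcon
        push_neg at hcon
        have h3 : (a + 1) ^ 2 ≤ (2 ^ (i + 2)) ^ 2 := Nat.pow_le_pow_left (by omega) 2
        have he : ((2:ℕ) ^ (i + 2)) ^ 2 = 16 * 4 ^ i := by rw [four_pow]; ring
        omega
      have h2i1 : 2 * i + 1 ≤ a := by
        have t1 := two_mul_le_pow i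
        have e : (2:ℕ) ^ (i + 2) = 2 * 2 ^ (i + 1) := by ring
        have t2 : 1 ≤ (2:ℕ) ^ (i + 1) := Nat.one_le_two_pow
        omega
      have hpts : a + 2 * (i + 1) ≤ n := by
        by_contra hcon
        push_neg at hcon
        have hFle : F ≤ (a + (2 * i + 1)).factorial := by
          rw [hF]
          exact Nat.factorial_le (by omega)
        have hub : (a + (2 * i + 1)).factorial ≤ a.factorial * (2 * a) ^ (2 * i + 1) :=
          fact_ub a (2 * i + 1) h2i1
        have hkey : 8 * (2 * a) ^ (2 * i + 1) < a.factorial := key_lemma a i (by omega) h2pow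
        have hmul : a.factorial * (8 * (2 * a) ^ (2 * i + 1)) < a.factorial * a.factorial :=
          (mul_lt_mul_iff_right₀ (by omega : 0 < a.factorial)).mpr hkey
        nlinarith
      obtain ⟨H, hH⟩ := exists_perm_subgroup n a (i + 1) hpts
      have hsq : (a.factorial * 2 ^ (i + 1)) ^ 2 = 4 * (a.factorial ^ 2 * 4 ^ i) := by
        rw [four_pow]; ring
      have e2 : 2 * a.factorial ^ 2 * 4 ^ (i + 1) = 8 * (a.factorial ^ 2 * 4 ^ i) := by
        ring
      rw [e2] at hjspec
      exact ⟨H, by rw [hH, hsq]; linarith, by rw [hH, hsq]; linarith⟩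

/-- For every `n ≥ 7`, the symmetric group `Sₙ` has a subgroup `H` with
`√(n!)/√2 ≤ |H| ≤ √(2·n!)`. -/
theorem stmt11 (n : ℕ) (hn : 7 ≤ n) :
    ∃ H : Subgroup (Equiv.Perm (Fin n)),
      Real.sqrt n.factorial / Real.sqrt 2 ≤ Nat.card H ∧
      (Nat.card H : ℝ) ≤ Real.sqrt (2 * n.factorial) := by
  obtain ⟨H, h1, h2⟩ := select n hn
  refine ⟨H, ?_, ?_⟩
  · rw [div_le_iff₀ (Real.sqrt_pos.mpr (by norm_num : (0:ℝ) < 2))]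
    have hle : (n.factorial : ℝ) ≤ 2 * (Nat.card H : ℝ) ^ 2 := by exact_mod_cast h1
    calc Real.sqrt n.factorial ≤ Real.sqrt (2 * (Nat.card H : ℝ) ^ 2) :=
          Real.sqrt_le_sqrt hle
      _ = (Nat.card H : ℝ) * Real.sqrt 2 := by
          rw [Real.sqrt_mul (by norm_num : (0:ℝ) ≤ 2), Real.sqrt_sq (by positivity)]
          ring
  · have hle : ((Nat.card H : ℝ)) ^ 2 ≤ 2 * (n.factorial : ℝ) := by exact_mod_cast h2
    calc (Nat.card H : ℝ) = Real.sqrt ((Nat.card H : ℝ) ^ 2) :=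
          (Real.sqrt_sq (by positivity)).symm
      _ ≤ Real.sqrt (2 * n.factorial) := Real.sqrt_le_sqrt hle
end

section
/- For every integer n ≥ 7, the unique real solution y ≥ 1 of y! = √(n!) satisfies ⌊y⌋ ≤ (2n−1)/3. -/
/-- Key arithmetic lemma: if `7 ≤ n` and `2*n ≤ 3*k`, then `n! < (k!)^2`. -/
lemma fact_sq_gt (n : ℕ) (hn : 7 ≤ n) : ∀ k, 2 * n ≤ 3 * k → n.factorial < k.factorial ^ 2 := by
  induction n using Nat.strong_induction_on with
  | _ n ih =>
    intro k hk
    by_cases h10 : n < 10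
    · interval_cases n
      · -- n = 7, k ≥ 5
        have hk5 : 5 ≤ k := by omega
        have : Nat.factorial 5 ≤ Nat.factorial k := Nat.factorial_le hk5
        have : Nat.factorial 5 ^ 2 ≤ Nat.factorial k ^ 2 := Nat.pow_le_pow_left this 2
        calc Nat.factorial 7 < Nat.factorial 5 ^ 2 := by decide
          _ ≤ _ := this
      · have hk6 : 6 ≤ k := by omega
        have : Nat.factorial 6 ^ 2 ≤ Nat.factorial k ^ 2 :=
          Nat.pow_le_pow_left (Nat.factorial_le hk6) 2
        calc Nat.factorial 8 < Nat.factorial 6 ^ 2 := by decide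
          _ ≤ _ := this
      · have hk6 : 6 ≤ k := by omega
        have : Nat.factorial 6 ^ 2 ≤ Nat.factorial k ^ 2 :=
          Nat.pow_le_pow_left (Nat.factorial_le hk6) 2
        calc Nat.factorial 9 < Nat.factorial 6 ^ 2 := by decide
          _ ≤ _ := this
    · -- n ≥ 10; write n = m + 3, k = j + 2
      obtain ⟨m, rfl⟩ : ∃ m, n = m + 3 := ⟨n - 3, by omega⟩
      obtain ⟨j, rfl⟩ : ∃ j, k = j + 2 := ⟨k - 2, by omega⟩
      have hm : 7 ≤ m := by omega
      have hjk : 2 * m ≤ 3 * j := by omega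
      have IH : m.factorial < j.factorial ^ 2 := ih m (by omega) hm j hjk
      have hstep : (m + 1) * (m + 2) * (m + 3) ≤ ((j + 1) * (j + 2)) ^ 2 := by
        have h1 : (2*m+3)*(2*m+6) ≤ 9*((j+1)*(j+2)) := by
          have := Nat.mul_le_mul (show 2*m+3 ≤ 3*(j+1) by omega) (show 2*m+6 ≤ 3*(j+2) by omega)
          calc (2*m+3)*(2*m+6) ≤ (3*(j+1))*(3*(j+2)) := this
            _ = 9*((j+1)*(j+2)) := by ring
        have h2 : 81*((m+1)*(m+2)*(m+3)) ≤ ((2*m+3)*(2*m+6))^2 := by nlinarith [hm]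
        have h3 : ((2*m+3)*(2*m+6))^2 ≤ 81*(((j+1)*(j+2))^2) := by
          calc ((2*m+3)*(2*m+6))^2 ≤ (9*((j+1)*(j+2)))^2 := Nat.pow_le_pow_left h1 2
            _ = 81*(((j+1)*(j+2))^2) := by ring
        omega
      have e1 : (m + 3).factorial = m.factorial * ((m + 1) * (m + 2) * (m + 3)) := by
        simp [Nat.factorial_succ]; ring
      have e2 : (j + 2).factorial ^ 2 = j.factorial ^ 2 * ((j + 1) * (j + 2)) ^ 2 := by
        simp [Nat.factorial_succ]; ring
      rw [e1, e2]
      have hmpos : 0 < (m + 1) * (m + 2) * (m + 3) := by positivity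
      calc m.factorial * ((m + 1) * (m + 2) * (m + 3))
          < j.factorial ^ 2 * ((m + 1) * (m + 2) * (m + 3)) :=
            (Nat.mul_lt_mul_right hmpos).2 IH
        _ ≤ j.factorial ^ 2 * ((j + 1) * (j + 2)) ^ 2 :=
            Nat.mul_le_mul_left _ hstep

/-- For every `n ≥ 7`, the unique real solution `y ≥ 1` of `y! = √(n!)`
(where `y! = Γ(y+1)`) satisfies `⌊y⌋ ≤ (2n−1)/3`. -/
theorem stmt12 (n : ℕ) (hn : 7 ≤ n) (y : ℝ) (hy : 1 ≤ y)
    (hsol : Real.Gamma (y + 1) = Real.sqrt (n.factorial)) :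
    ((⌊y⌋₊ : ℕ) : ℝ) ≤ (2 * (n : ℝ) - 1) / 3 := by
  set k := ⌊y⌋₊ with hkdef
  have hk1 : 1 ≤ k := Nat.one_le_floor_iff y |>.2 hy
  have hky : (k : ℝ) ≤ y := Nat.floor_le (by linarith)
  -- Gamma monotone on [2, ∞)
  have hmono : Real.Gamma ((k : ℝ) + 1) ≤ Real.Gamma (y + 1) := by
    rcases eq_or_lt_of_le hky with h | h
    · rw [h]
    · have hk1R : (1:ℝ) ≤ (k:ℝ) := by exact_mod_cast hk1
      exact le_of_lt (Real.Gamma_strictMonoOn_Ici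
        (by simp only [Set.mem_Ici]; linarith)
        (by simp only [Set.mem_Ici]; linarith)
        (by linarith))
  have hgamk : Real.Gamma ((k : ℝ) + 1) = (k.factorial : ℝ) := by
    exact_mod_cast Real.Gamma_nat_eq_factorial k
  have hsq : ((k.factorial : ℝ)) ^ 2 ≤ (n.factorial : ℝ) := by
    have hfpos : (0 : ℝ) ≤ (k.factorial : ℝ) := by positivity
    have hGpos : 0 ≤ Real.Gamma ((k:ℝ) + 1) := by rw [hgamk]; positivity
    have : ((k.factorial : ℝ)) ^ 2 ≤ Real.Gamma (y + 1) ^ 2 := by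
      rw [← hgamk]; exact pow_le_pow_left₀ hGpos hmono 2
    rw [hsol, Real.sq_sqrt (by positivity)] at this
    exact this
  have hnat : k.factorial ^ 2 ≤ n.factorial := by exact_mod_cast hsq
  have hkey : 3 * k ≤ 2 * n - 1 := by
    by_contra h
    exact absurd hnat (not_le.2 (fact_sq_gt n hn k (by omega)))
  have : (3 : ℝ) * k ≤ 2 * n - 1 := by
    have : (3 * k : ℕ) ≤ (2 * n - 1 : ℕ) := hkey
    have h2 : ((2 * n - 1 : ℕ) : ℝ) = 2 * (n : ℝ) - 1 := by
      have : 1 ≤ 2 * n := by omega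
      push_cast [Nat.cast_sub this]; ring
    calc (3 : ℝ) * k = ((3 * k : ℕ) : ℝ) := by push_cast; ring
      _ ≤ ((2 * n - 1 : ℕ) : ℝ) := by exact_mod_cast hkey
      _ = 2 * (n : ℝ) - 1 := h2
  linarith
end

section
/- Let K be a subgroup of S_n (acting on {1, …, n}) and let g ∈ S_n. Order permutations by the lexicographic order on their base images [g(1), g(2), …, g(n)]. Then g is the lexicographically least element of its left coset gK if and only if, for every j with 1 ≤ j ≤ n, the point g(j) is the least element of its orbit under the pointwise stabilizer K_{g(1), …, g(j−1)} = {h ∈ K : h(g(i)) = g(i) for all 1 ≤ i < j}. -/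
/-- Sims' coset-ordering lemma.  Let `K ≤ Sₙ` and `g ∈ Sₙ`.  Order permutations
lexicographically by their base images `[g(1), …, g(n)]`.  Then `g` is the
lexicographically least element of its coset `gK` if and only if for every `j`,
the point `g(j)` is the least element of its orbit under the pointwise
stabilizer `K_{g(1), …, g(j−1)}`.

(The paper composes permutations so that the base image of `g·k` is obtained by
applying `k` to the values of `g`; under Mathlib's convention
`(h * g) x = h (g x)`, the coset `gK` of the paper is therefore the set
`{k * g : k ∈ K}`.  Points are `0`-indexed via `Fin n`.) -/
theorem stmt13 (n : ℕ) (K : Subgroup (Equiv.Perm (Fin n))) (g : Equiv.Perm (Fin n)) :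
    (∀ k ∈ K, toLex (⇑g) ≤ toLex (⇑(k * g))) ↔
    (∀ j : Fin n, ∀ k ∈ K, (∀ i : Fin n, i < j → k (g i) = g i) → g j ≤ k (g j)) := by
  constructor
  · intro h j k hk hfix
    by_contra hlt
    push_neg at hlt
    have hlex : toLex (⇑(k * g)) < toLex (⇑g) :=
      ⟨j, fun i hi => hfix i hi, hlt⟩
    exact absurd ((h k hk).trans_lt hlex) (lt_irrefl _)
  · intro h k hk
    by_cases heq : ⇑g = ⇑(k * g)
    · exact le_of_eq (congrArg toLex heq)
    · obtain ⟨j, hj, hmin⟩ := (IsWellFounded.wf (r := (· < ·))).has_min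
        {i : Fin n | g i ≠ (k * g) i} (Function.ne_iff.1 heq)
      have hagree : ∀ i : Fin n, i < j → k (g i) = g i := fun i hi =>
        (not_not.1 fun hne => hmin i hne hi).symm
      have hle : g j ≤ k (g j) := h j k hk hagree
      have hlex : toLex (⇑g) < toLex (⇑(k * g)) :=
        ⟨j, fun i hi => (hagree i hi).symm, lt_of_le_of_ne hle hj⟩
      exact le_of_lt hlex
end
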